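/- Let a finite oriented metric graph be given in which every vertex is boundary-reachable, and let L = ∑_{e ∈ E} ℓ e denote its total length. Let p = (p_e) be a family of functions, each continuously differentiable on [0, ℓ e], continuous across vertices with vertex values P : V → ℝ, and with P(v) = 0 at every boundary vertex. Then ∑_{e ∈ E} ∫₀^{ℓ e} p_e(s)² ds ≤ L² · ∑_{e ∈ E} ∫₀^{ℓ e} p_e'(s)² ds (a Poincaré inequality on the network, with constant depending only on the total length). -/

import Mathlib

open MeasureTheory intervalIntegral
open scoped BigOperators

/-- 1D Cauchy–Schwarz: `(∫ |g|)² ≤ ℓ ∫ g²` for `g` continuous on `[0, ℓ]`. -/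
lemma network_poincare_cs1d {g : ℝ → ℝ} {l : ℝ} (h0 : 0 < l)
    (hc : ContinuousOn g (Set.Icc 0 l)) :
    (∫ s in (0:ℝ)..l, |g s|) ^ 2 ≤ l * ∫ s in (0:ℝ)..l, (g s) ^ 2 := by
  have huIcc : Set.uIcc (0:ℝ) l = Set.Icc 0 l := Set.uIcc_of_le h0.le
  have habs : IntervalIntegrable (fun s => |g s|) volume 0 l :=
    ((hc.abs).mono (by rw [huIcc])).intervalIntegrable
  have hsq : IntervalIntegrable (fun s => (g s) ^ 2) volume 0 l :=
    ((hc.pow 2).mono (by rw [huIcc])).intervalIntegrable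
  set A : ℝ := ∫ s in (0:ℝ)..l, |g s| with hA
  set c : ℝ := A / l with hc'
  have hnonneg : 0 ≤ ∫ s in (0:ℝ)..l, (|g s| - c) ^ 2 :=
    intervalIntegral.integral_nonneg h0.le (fun u _ => sq_nonneg _)
  have hexp : (∫ s in (0:ℝ)..l, (|g s| - c) ^ 2)
      = (∫ s in (0:ℝ)..l, (g s) ^ 2) - 2 * c * A + l * c ^ 2 := by
    have h1 : ∀ s : ℝ, (|g s| - c) ^ 2 = (g s) ^ 2 - (2 * c) * |g s| + c ^ 2 := by
      intro s; rw [sub_sq, sq_abs]; ring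
    simp_rw [h1]
    rw [intervalIntegral.integral_add (hsq.sub (habs.const_mul (2 * c)))
      intervalIntegrable_const, intervalIntegral.integral_sub hsq (habs.const_mul (2 * c)),
      intervalIntegral.integral_const_mul, intervalIntegral.integral_const, ← hA]
    simp only [smul_eq_mul, sub_zero]
  rw [hexp] at hnonneg
  have hkey : 0 ≤ (∫ s in (0:ℝ)..l, (g s) ^ 2) - A ^ 2 / l := by
    have hc2 : l * c ^ 2 = A ^ 2 / l := by rw [hc']; field_simp
    have hc3 : 2 * c * A = 2 * (A ^ 2 / l) := by rw [hc']; field_simp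
    rw [hc2, hc3] at hnonneg; linarith
  have := (div_le_iff₀ h0).mp (by linarith : A ^ 2 / l ≤ ∫ s in (0:ℝ)..l, (g s) ^ 2)
  linarith [this]

/-- The degree of a vertex `v`: `#{e | src e = v} + #{e | dst e = v}`. -/
def degree {E V : Type*} [Fintype E] [DecidableEq V] (src dst : E → V) (v : V) : ℕ :=
  (Finset.univ.filter fun e => src e = v).card +
    (Finset.univ.filter fun e => dst e = v).card

/-- A vertex `v` is boundary-reachable if there is a finite walk along edges
(traversed in either direction) from `v` to some vertex of degree one. -/
def BoundaryReachable {E V : Type*} [Fintype E] [DecidableEq V]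
    (src dst : E → V) (v : V) : Prop :=
  ∃ b : V, Relation.ReflTransGen
      (fun x y => ∃ e, (src e = x ∧ dst e = y) ∨ (src e = y ∧ dst e = x)) v b ∧
    degree src dst b = 1

/-- Poincaré inequality on a network: on a finite oriented metric graph of total length
`L` in which every vertex is boundary-reachable, every edgewise continuously
differentiable family `p`, continuous across vertices with vertex values vanishing at
boundary vertices, satisfies
`∑_e ∫₀^{ℓ e} p_e² ≤ L² ∑_e ∫₀^{ℓ e} (p_e')²`. -/
theorem network_poincare
    {E V : Type*} [Fintype E] [Fintype V] [DecidableEq V]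
    (src dst : E → V) (ℓ : E → ℝ) (hℓ : ∀ e, 0 < ℓ e)
    (hreach : ∀ v : V, BoundaryReachable src dst v)
    (p p' : E → ℝ → ℝ)
    (hp : ∀ e, ∀ s ∈ Set.Icc (0:ℝ) (ℓ e),
      HasDerivWithinAt (p e) (p' e s) (Set.Icc (0:ℝ) (ℓ e)) s)
    (hp' : ∀ e, ContinuousOn (p' e) (Set.Icc (0:ℝ) (ℓ e)))
    (P : V → ℝ)
    (hPsrc : ∀ e, p e 0 = P (src e))
    (hPdst : ∀ e, p e (ℓ e) = P (dst e))
    (hP0 : ∀ v, degree src dst v = 1 → P v = 0) :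
    (∑ e, ∫ s in (0:ℝ)..(ℓ e), (p e s) ^ 2)
      ≤ (∑ e, ℓ e) ^ 2 * ∑ e, ∫ s in (0:ℝ)..(ℓ e), (p' e s) ^ 2 := by
  classical
  set A : E → ℝ := fun e => ∫ s in (0:ℝ)..(ℓ e), |p' e s| with hAdef
  have hAnn : ∀ e, 0 ≤ A e := fun e =>
    intervalIntegral.integral_nonneg (hℓ e).le (fun u _ => abs_nonneg _)
  have hpc : ∀ e, ContinuousOn (p e) (Set.Icc 0 (ℓ e)) :=
    fun e s hs => (hp e s hs).continuousWithinAt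
  have hpint : ∀ e a b, 0 ≤ a → a ≤ b → b ≤ ℓ e →
      IntervalIntegrable (p' e) volume a b := by
    intro e a b ha hab hb
    exact ((hp' e).mono
      (by rw [Set.uIcc_of_le hab]; exact Set.Icc_subset_Icc ha hb)).intervalIntegrable
  -- the key analytic estimate along a single edge
  have habs : ∀ e a b, 0 ≤ a → a ≤ b → b ≤ ℓ e → |p e b - p e a| ≤ A e := by
    intro e a b ha hab hb
    have hftc : (∫ s in a..b, p' e s) = p e b - p e a := by
      refine intervalIntegral.integral_eq_sub_of_hasDeriv_right_of_le hab
        ((hpc e).mono (Set.Icc_subset_Icc ha hb)) (fun x hx => ?_) (hpint e a b ha hab hb)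
      exact (hp e x ⟨ha.trans hx.1.le, hx.2.le.trans hb⟩).mono_of_mem_nhdsWithin
        (Icc_mem_nhdsGT_of_mem ⟨ha.trans hx.1.le, lt_of_lt_of_le hx.2 hb⟩)
    rw [← hftc]
    refine (intervalIntegral.abs_integral_le_integral_abs hab).trans ?_
    refine intervalIntegral.integral_mono_interval ha hab hb
      (Filter.Eventually.of_forall fun x => abs_nonneg _) ?_
    exact ((hp' e).abs.mono (by rw [Set.uIcc_of_le (hℓ e).le])).intervalIntegrable
  -- the simple graph underlying the network
  let G : SimpleGraph V := SimpleGraph.fromRel (fun x y => ∃ e, src e = x ∧ dst e = y)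
  have hGadj' : ∀ {x y : V}, G.Adj x y →
      x ≠ y ∧ ((∃ e, src e = x ∧ dst e = y) ∨ (∃ e, src e = y ∧ dst e = x)) := fun h => h
  have hGadj : ∀ {x y : V}, x ≠ y →
      ((∃ e, src e = x ∧ dst e = y) ∨ (∃ e, src e = y ∧ dst e = x)) → G.Adj x y :=
    fun hne hor => ⟨hne, hor⟩
  have hedge : ∀ e, |P (src e) - P (dst e)| ≤ A e := by
    intro e
    rw [← hPsrc e, ← hPdst e, abs_sub_comm]
    exact habs e 0 (ℓ e) le_rfl (hℓ e).le le_rfl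
  have hadjA : ∀ {x y : V}, G.Adj x y → ∃ e,
      ((src e = x ∧ dst e = y) ∨ (src e = y ∧ dst e = x)) ∧ |P x - P y| ≤ A e := by
    intro x y h
    rcases (hGadj' h).2 with ⟨e, h1, h2⟩ | ⟨e, h1, h2⟩
    · exact ⟨e, Or.inl ⟨h1, h2⟩, by rw [← h1, ← h2]; exact hedge e⟩
    · exact ⟨e, Or.inr ⟨h1, h2⟩, by rw [← h1, ← h2, abs_sub_comm]; exact hedge e⟩
  -- key combinatorial lemma: telescoping along a simple path
  have key : ∀ (b v : V) (w : G.Walk v b), w.IsPath → ∃ T : Finset E,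
      (∀ f ∈ T, ((src f ∈ w.support ∧ dst f ∈ w.support) ∧
        (src f ∈ w.support.tail ∨ dst f ∈ w.support.tail))) ∧
      |P v - P b| ≤ ∑ f ∈ T, A f := by
    intro b v w
    induction w with
    | nil => intro _; exact ⟨∅, by simp, by simp⟩
    | @cons u x c hadj q ih =>
      intro hpath
      rw [SimpleGraph.Walk.cons_isPath_iff] at hpath
      obtain ⟨hq, hu⟩ := hpath
      obtain ⟨T', hT', hle⟩ := ih hq
      obtain ⟨e, hends, hPle⟩ := hadjA hadj
      have hxstart : q.support = x :: q.support.tail := q.support_eq_cons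
      have hxnotin : x ∉ q.support.tail := by
        have hnd := hq.support_nodup
        rw [hxstart] at hnd
        exact (List.nodup_cons.mp hnd).1
      have hunotin : u ∉ q.support.tail := fun h => hu (List.mem_of_mem_tail h)
      have hsrc_mem : src e = u ∨ src e = x := hends.imp And.left And.left
      have hdst_mem : dst e = x ∨ dst e = u := hends.imp And.right And.right
      have heT' : e ∉ T' := by
        intro hmem
        rcases (hT' e hmem).2 with h | h
        · rcases hsrc_mem with h1 | h1 <;> rw [h1] at h
          exacts [hunotin h, hxnotin h]
        · rcases hdst_mem with h1 | h1 <;> rw [h1] at h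
          exacts [hxnotin h, hunotin h]
      refine ⟨insert e T', ?_, ?_⟩
      · intro f hf
        rw [SimpleGraph.Walk.support_cons]
        rcases Finset.mem_insert.mp hf with rfl | hf'
        · refine ⟨⟨?_, ?_⟩, ?_⟩
          · rcases hsrc_mem with h1 | h1 <;> rw [h1]
            · exact List.mem_cons_self
            · exact List.mem_cons_of_mem _ q.start_mem_support
          · rcases hdst_mem with h1 | h1 <;> rw [h1]
            · exact List.mem_cons_of_mem _ q.start_mem_support
            · exact List.mem_cons_self
          · rw [List.tail_cons]
            rcases hends with ⟨h1, h2⟩ | ⟨h1, h2⟩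
            · right; rw [h2]; exact q.start_mem_support
            · left; rw [h1]; exact q.start_mem_support
        · obtain ⟨⟨hs1, hs2⟩, hs3⟩ := hT' f hf'
          refine ⟨⟨List.mem_cons_of_mem _ hs1, List.mem_cons_of_mem _ hs2⟩, ?_⟩
          rw [List.tail_cons]
          exact hs3.imp List.mem_of_mem_tail List.mem_of_mem_tail
      · rw [Finset.sum_insert heT']
        calc |P u - P c| ≤ |P u - P x| + |P x - P c| := abs_sub_le _ _ _
          _ ≤ A e + ∑ f ∈ T', A f := add_le_add hPle hle
  -- from each edge, one of its endpoints admits a path to the boundary avoiding the edge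
  have main : ∀ e0 : E,
      (∃ T : Finset E, e0 ∉ T ∧ |P (src e0)| ≤ ∑ f ∈ T, A f) ∨
      (∃ T : Finset E, e0 ∉ T ∧ |P (dst e0)| ≤ ∑ f ∈ T, A f) := by
    intro e0
    obtain ⟨b, hwalk, hdeg⟩ := hreach (src e0)
    have hG : Relation.ReflTransGen G.Adj (src e0) b := by
      clear hdeg
      induction hwalk with
      | refl => exact Relation.ReflTransGen.refl
      | @tail y z h1 h2 ih =>
        obtain ⟨e, he⟩ := h2
        by_cases hyz : y = z
        · subst hyz; exact ih
        · exact ih.tail (hGadj hyz (he.imp (fun h => ⟨e, h⟩) (fun h => ⟨e, h⟩)))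
    have hPb : P b = 0 := hP0 b hdeg
    obtain ⟨w0⟩ := (SimpleGraph.reachable_iff_reflTransGen (G := G) _ _).mpr hG
    have hw1path : (w0.toPath.1 : G.Walk (src e0) b).IsPath := w0.toPath.2
    obtain ⟨T, hT, hle⟩ := key b (src e0) w0.toPath.1 hw1path
    by_cases he0 : e0 ∈ T
    · right
      obtain ⟨⟨hs1, hs2⟩, hs3⟩ := hT e0 he0
      have hnodup := hw1path.support_nodup
      have hhead : (w0.toPath.1).support = src e0 :: (w0.toPath.1).support.tail :=
        (w0.toPath.1).support_eq_cons
      have hsrcnotin : src e0 ∉ (w0.toPath.1).support.tail := by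
        rw [hhead] at hnodup
        exact (List.nodup_cons.mp hnodup).1
      have hdst_tail : dst e0 ∈ (w0.toPath.1).support.tail := by
        rcases hs3 with h | h
        · exact absurd h hsrcnotin
        · exact h
      have hne : src e0 ≠ dst e0 := fun h => hsrcnotin (by rw [← h] at hdst_tail; exact hdst_tail)
      have hdmem : dst e0 ∈ (w0.toPath.1).support := List.mem_of_mem_tail hdst_tail
      obtain ⟨T2, hT2, hle2⟩ := key b (dst e0) ((w0.toPath.1).dropUntil (dst e0) hdmem)
        (hw1path.dropUntil hdmem)
      have hsrcnot2 : src e0 ∉ ((w0.toPath.1).dropUntil (dst e0) hdmem).support := by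
        have hsupp : (w0.toPath.1).support =
            ((w0.toPath.1).takeUntil (dst e0) hdmem).support ++
              ((w0.toPath.1).dropUntil (dst e0) hdmem).support.tail := by
          conv_lhs => rw [← (w0.toPath.1).take_spec hdmem]
          exact SimpleGraph.Walk.support_append _ _
        intro hmem
        rw [((w0.toPath.1).dropUntil (dst e0) hdmem).support_eq_cons] at hmem
        rcases List.mem_cons.mp hmem with h | h
        · exact hne h
        · have hnodup' := hw1path.support_nodup
          rw [hsupp] at hnodup'
          exact (List.disjoint_of_nodup_append hnodup')
            (SimpleGraph.Walk.start_mem_support _) h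
      have he0T2 : e0 ∉ T2 := fun h => hsrcnot2 (hT2 e0 h).1.1
      exact ⟨T2, he0T2, by rwa [hPb, sub_zero] at hle2⟩
    · left
      exact ⟨T, he0, by rwa [hPb, sub_zero] at hle⟩
  -- the pointwise bound
  have hpoint : ∀ e0, ∀ s ∈ Set.Icc (0:ℝ) (ℓ e0), |p e0 s| ≤ ∑ e, A e := by
    intro e0 s hs
    have hsum : ∀ T : Finset E, e0 ∉ T → A e0 + ∑ f ∈ T, A f ≤ ∑ e, A e := by
      intro T he0
      have h1 : ∑ f ∈ T, A f ≤ ∑ f ∈ Finset.univ.erase e0, A f :=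
        Finset.sum_le_sum_of_subset_of_nonneg
          (fun f hf => Finset.mem_erase.mpr ⟨fun h => he0 (h ▸ hf), Finset.mem_univ f⟩)
          (fun f _ _ => hAnn f)
      have h2 : A e0 + ∑ f ∈ Finset.univ.erase e0, A f = ∑ e, A e :=
        Finset.add_sum_erase _ _ (Finset.mem_univ e0)
      linarith
    rcases main e0 with ⟨T, he0, hle⟩ | ⟨T, he0, hle⟩
    · have h1 : |p e0 s - p e0 0| ≤ A e0 := habs e0 0 s le_rfl hs.1 hs.2
      have h2 : |p e0 s| ≤ |p e0 s - p e0 0| + |p e0 0| := by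
        simpa using abs_add_le (p e0 s - p e0 0) (p e0 0)
      have hle' : |p e0 0| ≤ ∑ f ∈ T, A f := by rw [hPsrc e0]; exact hle
      calc |p e0 s| ≤ A e0 + ∑ f ∈ T, A f := h2.trans (add_le_add h1 hle')
        _ ≤ ∑ e, A e := hsum T he0
    · have h1 : |p e0 s - p e0 (ℓ e0)| ≤ A e0 := by
        rw [abs_sub_comm]; exact habs e0 s (ℓ e0) hs.1 hs.2 le_rfl
      have h2 : |p e0 s| ≤ |p e0 s - p e0 (ℓ e0)| + |p e0 (ℓ e0)| := by
        simpa using abs_add_le (p e0 s - p e0 (ℓ e0)) (p e0 (ℓ e0))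
      have hle' : |p e0 (ℓ e0)| ≤ ∑ f ∈ T, A f := by rw [hPdst e0]; exact hle
      calc |p e0 s| ≤ A e0 + ∑ f ∈ T, A f := h2.trans (add_le_add h1 hle')
        _ ≤ ∑ e, A e := hsum T he0
  -- assembling the integral estimates
  set M : ℝ := ∑ e, A e with hM
  have hMnn : 0 ≤ M := Finset.sum_nonneg fun e _ => hAnn e
  have hLnn : 0 ≤ ∑ e, ℓ e := Finset.sum_nonneg fun e _ => (hℓ e).le
  have step1 : ∀ e, (∫ s in (0:ℝ)..(ℓ e), (p e s) ^ 2) ≤ ℓ e * M ^ 2 := by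
    intro e
    have hi1 : IntervalIntegrable (fun s => (p e s) ^ 2) volume 0 (ℓ e) :=
      (((hpc e).pow 2).mono (by rw [Set.uIcc_of_le (hℓ e).le])).intervalIntegrable
    have h := intervalIntegral.integral_mono_on (μ := volume) (g := fun _ => M ^ 2)
      (hℓ e).le hi1 intervalIntegrable_const (fun x hx => by
        have := abs_le.mp (hpoint e x hx)
        exact sq_le_sq' (by linarith [this.1]) this.2)
    rw [intervalIntegral.integral_const] at h
    simpa using h
  have step2 : ∀ e, A e ^ 2 ≤ ℓ e * ∫ s in (0:ℝ)..(ℓ e), (p' e s) ^ 2 := fun e =>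
    network_poincare_cs1d (hℓ e) (hp' e)
  have step3 : M ^ 2 ≤ (∑ e, ℓ e) * ∑ e, (A e ^ 2 / ℓ e) := by
    rw [hM]
    exact Finset.sum_sq_le_sum_mul_sum_of_sq_eq_mul Finset.univ
      (fun e _ => (hℓ e).le) (fun e _ => div_nonneg (sq_nonneg _) (hℓ e).le)
      (fun e _ => by rw [mul_comm, div_mul_cancel₀ _ (hℓ e).ne'])
  have step4 : ∑ e, A e ^ 2 / ℓ e ≤ ∑ e, ∫ s in (0:ℝ)..(ℓ e), (p' e s) ^ 2 :=
    Finset.sum_le_sum fun e _ => (div_le_iff₀ (hℓ e)).mpr (by rw [mul_comm]; exact step2 e)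
  calc (∑ e, ∫ s in (0:ℝ)..(ℓ e), (p e s) ^ 2)
      ≤ ∑ e, ℓ e * M ^ 2 := Finset.sum_le_sum fun e _ => step1 e
    _ = (∑ e, ℓ e) * M ^ 2 := by rw [Finset.sum_mul]
    _ ≤ (∑ e, ℓ e) * ((∑ e, ℓ e) * ∑ e, ∫ s in (0:ℝ)..(ℓ e), (p' e s) ^ 2) :=
        mul_le_mul_of_nonneg_left
          (step3.trans (mul_le_mul_of_nonneg_left step4 hLnn)) hLnn
    _ = (∑ e, ℓ e) ^ 2 * ∑ e, ∫ s in (0:ℝ)..(ℓ e), (p' e s) ^ 2 := by ring
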